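/- arXiv:0812.1674 — 6 statements merged into one kernel-verified Lean document; each statement's English description precedes it below -/
import Mathlib

section
/- Let G be a group, X a G-category, and (X, ξ) a fixed 1-cocycle G → X. Equip End(X) with the G-action g•a = ξ_g ∘ g(a) ∘ ξ_g⁻¹. Then the assignment φ ↦ (X, (φ(g) ∘ ξ_g)_{g∈G}) is a bijection between 1-cocycles φ : G → End(X) (maps with φ(1) = 1 and φ(hg) = φ(h)·(h•φ(g))) and 1-cocycles (X, ξ') : G → X with underlying object X. -/
open CategoryTheory

/-- For a fixed 1-cocycle `(pt, ξ) : G → X`, equip `End(pt)` with the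
`G`-action `g • a = ξ g ∘ g(a) ∘ (ξ g)⁻¹`. Then `φ ↦ (pt, (φ g ∘ ξ g)_g)` is a
bijection between 1-cocycles `φ : G → End(pt)` and 1-cocycles `G → X` with
underlying object `pt`. -/
theorem cocycles_with_fixed_object {G : Type*} [Group G] {X : Type*} [Category X]
    (F : G → X ⥤ X) (hone : F 1 = 𝟭 X) (hmul : ∀ g h : G, F (h * g) = F g ⋙ F h)
    (pt : X) (ξ : ∀ g : G, (F g).obj pt ⟶ pt)
    (hξone : ξ 1 = eqToHom (by rw [hone]; rfl))
    (hξmul : ∀ g h : G,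
      ξ (h * g) = eqToHom (by rw [hmul g h]; rfl) ≫ (F h).map (ξ g) ≫ ξ h)
    (hiso : ∀ g : G, IsIso (ξ g)) :
    ∃ e : {φ : G → (pt ⟶ pt) // φ 1 = 𝟙 pt ∧ ∀ g h : G,
            φ (h * g) = (haveI := hiso h; inv (ξ h) ≫ (F h).map (φ g) ≫ ξ h) ≫ φ h} ≃
          {ξ' : ∀ g : G, (F g).obj pt ⟶ pt // ξ' 1 = eqToHom (by rw [hone]; rfl) ∧
            ∀ g h : G, ξ' (h * g) =
              eqToHom (by rw [hmul g h]; rfl) ≫ (F h).map (ξ' g) ≫ ξ' h},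
      ∀ φ g, (e φ).1 g = ξ g ≫ φ.1 g := by
  haveI := hiso
  refine ⟨⟨fun φ => ⟨fun g => ξ g ≫ φ.1 g, ?_, ?_⟩,
          fun ξ' => ⟨fun g => inv (ξ g) ≫ ξ'.1 g, ?_, ?_⟩, ?_, ?_⟩, fun φ g => rfl⟩
  · dsimp only
    rw [φ.2.1, hξone, Category.comp_id]
  · intro g h
    dsimp only
    rw [φ.2.2 g h, hξmul g h]
    simp [Functor.map_comp]
  · dsimp only
    rw [IsIso.inv_comp_eq, ξ'.2.1, hξone, Category.comp_id]
  · intro g h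
    dsimp only
    rw [IsIso.inv_comp_eq, ξ'.2.2 g h, hξmul g h]
    simp [Functor.map_comp]
  · intro φ
    ext g
    simp
  · intro ξ'
    ext g
    simp
end

section
/- Let F ⊣ U be a G-Galois adjunction between a G-category X (with G-indexed coproducts) and a category Y. Then Y is equivalent to the category Z¹(G,X) of 1-cocycles G → X; under the equivalence, an object Y of Y corresponds to the 1-cocycle (U(Y), (U(ε_Y) ∘ η_{g(U(Y))})_{g∈G}). -/
open CategoryTheory CategoryTheory.Limits

variable {G : Type*} [Group G] {X : Type*} [Category X]

/-- A 1-cocycle `G → X` for a `G`-category `X`. -/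
structure Cocycle (F : G → X ⥤ X) (hone : F 1 = 𝟭 X)
    (hmul : ∀ g h : G, F (h * g) = F g ⋙ F h) where
  pt : X
  ξ : ∀ g : G, (F g).obj pt ⟶ pt
  ξ_one : ξ 1 = eqToHom (by rw [hone]; rfl)
  ξ_mul : ∀ g h : G, ξ (h * g) = eqToHom (by rw [hmul g h]; rfl) ≫ (F h).map (ξ g) ≫ ξ h

/-- The category `Z¹(G,X)` of 1-cocycles. -/
instance Cocycle.category (F : G → X ⥤ X) (hone : F 1 = 𝟭 X)
    (hmul : ∀ g h : G, F (h * g) = F g ⋙ F h) :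
    Category (Cocycle F hone hmul) where
  Hom c d := {f : c.pt ⟶ d.pt // ∀ g : G, (F g).map f ≫ d.ξ g = c.ξ g ≫ f}
  id c := ⟨𝟙 c.pt, by intro g; simp⟩
  comp {c d e} f k := ⟨f.1 ≫ k.1, by
    intro g
    rw [Functor.map_comp, Category.assoc, k.2 g, ← Category.assoc, f.2 g, Category.assoc]⟩
  id_comp f := by apply Subtype.ext; simp
  comp_id f := by apply Subtype.ext; simp
  assoc f g h := by apply Subtype.ext; simp

namespace GaloisDescentAux
variable {Y : Type*} [Category Y]
variable (F : G → X ⥤ X) (F' : X ⥤ Y) (U : Y ⥤ X) (adj : F' ⊣ U) (hF : ∀ g : G, F g ⋙ F' = F')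

/-- The canonical map `g(x) ⟶ UF'(x)`. -/
def θ (g : G) (x : X) : (F g).obj x ⟶ U.obj (F'.obj x) :=
  adj.unit.app ((F g).obj x) ≫ eqToHom (congrArg U.obj (Functor.congr_obj (hF g) x))

lemma unit_app_eqToHom {p q : X} (h : p = q) :
    adj.unit.app p ≫ eqToHom (show U.obj (F'.obj p) = U.obj (F'.obj q) by rw [h]) =
      eqToHom h ≫ adj.unit.app q := by subst h; simp

lemma θ_natural (g : G) {x x' : X} (f : x ⟶ x') :
    (F g).map f ≫ θ F F' U adj hF g x' = θ F F' U adj hF g x ≫ U.map (F'.map f) := by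
  simp only [θ]
  have h1 := adj.unit.naturality ((F g).map f)
  simp only [Functor.id_map, Functor.comp_map] at h1
  rw [← Category.assoc, h1, Category.assoc, Category.assoc]
  congr 1
  have h := Functor.congr_hom (hF g) f
  simp only [Functor.comp_map] at h
  rw [h]
  simp [eqToHom_map]

lemma θ_one (hone : F 1 = 𝟭 X) (x : X) :
    θ F F' U adj hF 1 x = eqToHom (Functor.congr_obj hone x) ≫ adj.unit.app x := by
  rw [θ]
  exact unit_app_eqToHom F' U adj (Functor.congr_obj hone x)

lemma θ_counit (g : G) (x : X) :
    U.map (F'.map (θ F F' U adj hF g x)) ≫ U.map (adj.counit.app (F'.obj x)) =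
      eqToHom (congrArg U.obj (Functor.congr_obj (hF g) x)) := by
  rw [← U.map_comp, θ]
  have h : F'.map (adj.unit.app ((F g).obj x) ≫
        eqToHom (congrArg U.obj (Functor.congr_obj (hF g) x))) ≫ adj.counit.app (F'.obj x)
      = eqToHom (Functor.congr_obj (hF g) x) := by
    rw [F'.map_comp, eqToHom_map, Category.assoc]
    have h2 := adj.counit.naturality (eqToHom (Functor.congr_obj (hF g) x))
    simp only [Functor.comp_map, Functor.id_map, eqToHom_map, Functor.comp_obj] at h2
    erw [h2, ← Category.assoc, adj.left_triangle_components]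
    simp
  rw [h, eqToHom_map]


lemma unit_conj {p q z : X} (h : p = q) (e : U.obj (F'.obj q) = z) :
    eqToHom h ≫ adj.unit.app q ≫ eqToHom e = adj.unit.app p ≫ eqToHom (by rw [h]; exact e) := by
  subst h; subst e; simp

lemma unit_conj' {p q z : X} (h : p = q) (e : U.obj (F'.obj q) = z) {w : X} (k : z ⟶ w) :
    eqToHom h ≫ adj.unit.app q ≫ eqToHom e ≫ k =
      adj.unit.app p ≫ eqToHom (by rw [h]; exact e) ≫ k := by
  subst h; subst e; simp

variable (hone : F 1 = 𝟭 X) (hmul : ∀ g h : G, F (h * g) = F g ⋙ F h)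

/-- The comparison functor from algebras to cocycles. -/
def Φ : adj.toMonad.Algebra ⥤ Cocycle F hone hmul where
  obj A :=
    { pt := A.A
      ξ := fun g => θ F F' U adj hF g A.A ≫ A.a
      ξ_one := by
        have key : ∀ a : U.obj (F'.obj A.A) ⟶ A.A, adj.unit.app A.A ≫ a = 𝟙 A.A →
            θ F F' U adj hF 1 A.A ≫ a = eqToHom (by rw [hone]; rfl) := by
          intro a hu
          rw [θ_one F F' U adj hF hone, Category.assoc]
          rw [hu]
          simp
        exact key A.a A.unit
      ξ_mul := fun g h => by
        have key : ∀ a : U.obj (F'.obj A.A) ⟶ A.A,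
            U.map (F'.map a) ≫ a = U.map (adj.counit.app (F'.obj A.A)) ≫ a →
            θ F F' U adj hF (h * g) A.A ≫ a = eqToHom (by rw [hmul g h]; rfl) ≫
              (F h).map (θ F F' U adj hF g A.A ≫ a) ≫ θ F F' U adj hF h A.A ≫ a := by
          intro a ha
          have n := θ_natural F F' U adj hF h (θ F F' U adj hF g A.A ≫ a)
          conv_rhs => rw [← Category.assoc ((F h).map _) (θ F F' U adj hF h A.A) a, n]
          simp only [Functor.map_comp, Category.assoc]
          rw [ha, ← Category.assoc (U.map (F'.map (θ F F' U adj hF g A.A))),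
            θ_counit F F' U adj hF g A.A]
          simp only [θ, Category.assoc, eqToHom_trans]
          rw [unit_conj' F' U adj]
          simp [eqToHom_trans]
        exact key A.a A.assoc.symm }
  map {A B} f :=
    ⟨f.f, fun g => by
      have key : ∀ (a : U.obj (F'.obj A.A) ⟶ A.A) (b : U.obj (F'.obj B.A) ⟶ B.A),
          U.map (F'.map f.f) ≫ b = a ≫ f.f →
          (F g).map f.f ≫ θ F F' U adj hF g B.A ≫ b = (θ F F' U adj hF g A.A ≫ a) ≫ f.f := by
        intro a b hf
        rw [← Category.assoc, θ_natural F F' U adj hF g f.f, Category.assoc]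
        rw [hf]
        simp
      exact key A.a B.a f.h⟩
  map_id A := Subtype.ext rfl
  map_comp f g := Subtype.ext rfl

section
variable [HasColimitsOfShape (Discrete G) X]

/-- The canonical comparison map `∐ g(x) ⟶ UF'(x)`. -/
noncomputable def γmap (x : X) : ∐ (fun g : G => (F g).obj x) ⟶ U.obj (F'.obj x) :=
  Sigma.desc fun g => θ F F' U adj hF g x

lemma ι_γmap (g : G) (x : X) :
    Sigma.ι (fun g : G => (F g).obj x) g ≫ γmap F F' U adj hF x = θ F F' U adj hF g x := by
  simp [γmap]

/-- `F g` is an equivalence. -/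
def FEquiv (g : G) : X ≌ X :=
  CategoryTheory.Equivalence.mk (F g) (F g⁻¹)
    (eqToIso (by rw [← hmul g g⁻¹, inv_mul_cancel, hone]))
    (eqToIso (by rw [← hmul g⁻¹ g, mul_inv_cancel, hone]))

lemma Φ_faithful : (Φ F F' U adj hF hone hmul).Faithful :=
  ⟨fun {A B} f g h => Monad.Algebra.Hom.ext (congrArg Subtype.val h)⟩

lemma Φ_full (hγ : ∀ x : X, IsIso (γmap F F' U adj hF x)) :
    (Φ F F' U adj hF hone hmul).Full where
  map_surjective {A B} k := by
    refine ⟨⟨k.1, ?_⟩, Subtype.ext rfl⟩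
    haveI := hγ A.A
    have key : ∀ (a : U.obj (F'.obj A.A) ⟶ A.A) (b : U.obj (F'.obj B.A) ⟶ B.A) (f : A.A ⟶ B.A),
        (∀ g, (F g).map f ≫ θ F F' U adj hF g B.A ≫ b = θ F F' U adj hF g A.A ≫ a ≫ f) →
        U.map (F'.map f) ≫ b = a ≫ f := by
      intro a b f hk
      rw [← cancel_epi (γmap F F' U adj hF A.A)]
      apply Sigma.hom_ext
      intro g
      conv_lhs => rw [← Category.assoc, ι_γmap]
      conv_rhs => rw [← Category.assoc, ι_γmap]
      rw [← Category.assoc, ← θ_natural, Category.assoc, hk g]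
    exact key A.a B.a k.1 (fun g => (k.2 g).trans (Category.assoc _ _ _))

lemma Φ_essSurj (hγ : ∀ x : X, IsIso (γmap F F' U adj hF x)) :
    (Φ F F' U adj hF hone hmul).EssSurj where
  mem_essImage c := by
    haveI := hγ c.pt
    set a : U.obj (F'.obj c.pt) ⟶ c.pt :=
      inv (γmap F F' U adj hF c.pt) ≫ Sigma.desc c.ξ with ha_def
    have ha : ∀ g : G, θ F F' U adj hF g c.pt ≫ a = c.ξ g := by
      intro g
      rw [← ι_γmap F F' U adj hF g c.pt, Category.assoc, ha_def]
      simp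
    have hunit : adj.unit.app c.pt ≫ a = 𝟙 c.pt := by
      have h1 : adj.unit.app c.pt =
          eqToHom (Functor.congr_obj hone c.pt).symm ≫ θ F F' U adj hF 1 c.pt := by
        rw [θ_one F F' U adj hF hone, ← Category.assoc, eqToHom_trans, eqToHom_refl,
          Category.id_comp]
      rw [h1, Category.assoc, ha 1, c.ξ_one, eqToHom_trans, eqToHom_refl]
      rfl
    have hassoc : U.map (F'.map a) ≫ a = U.map (adj.counit.app (F'.obj c.pt)) ≫ a := by
      haveI := hγ (U.obj (F'.obj c.pt))
      rw [← cancel_epi (γmap F F' U adj hF (U.obj (F'.obj c.pt)))]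
      apply Sigma.hom_ext
      intro g
      conv_lhs => rw [← Category.assoc, ι_γmap]
      conv_rhs => rw [← Category.assoc, ι_γmap]
      haveI : (F g).IsEquivalence := (FEquiv F hone hmul g).isEquivalence_functor
      rw [← cancel_epi ((F g).map (γmap F F' U adj hF c.pt))]
      apply (isColimitOfPreserves (F g)
        (colimit.isColimit (Discrete.functor fun h : G => (F h).obj c.pt))).hom_ext
      rintro ⟨h⟩
      simp only [Functor.mapCocone_ι_app, colimit.cocone_ι]
      have hιγ : colimit.ι (Discrete.functor fun h : G => (F h).obj c.pt) ⟨h⟩ ≫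
          γmap F F' U adj hF c.pt = θ F F' U adj hF h c.pt := ι_γmap F F' U adj hF h c.pt
      conv_lhs => rw [← Category.assoc, ← Functor.map_comp, hιγ]
      conv_rhs => rw [← Category.assoc, ← Functor.map_comp, hιγ]
      -- key computation
      have hL : (F g).map (θ F F' U adj hF h c.pt) ≫ θ F F' U adj hF g (U.obj (F'.obj c.pt)) ≫
          U.map (F'.map a) ≫ a = (F g).map (c.ξ h) ≫ c.ξ g := by
        rw [← Category.assoc, θ_natural, Category.assoc]
        rw [← Category.assoc (U.map _), ← U.map_comp, ← F'.map_comp, ha h]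
        rw [← Category.assoc, ← θ_natural, Category.assoc, ha g]
      have hM : (F g).map (c.ξ h) ≫ c.ξ g =
          eqToHom (show (F g).obj ((F h).obj c.pt) = (F (g * h)).obj c.pt by
            rw [hmul h g]; rfl) ≫ c.ξ (g * h) := by
        rw [c.ξ_mul h g, ← Category.assoc, eqToHom_trans, eqToHom_refl, Category.id_comp]
      have hR : (F g).map (θ F F' U adj hF h c.pt) ≫ θ F F' U adj hF g (U.obj (F'.obj c.pt)) ≫
          U.map (adj.counit.app (F'.obj c.pt)) ≫ a =
          adj.unit.app ((F g).obj ((F h).obj c.pt)) ≫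
            eqToHom (show U.obj (F'.obj ((F g).obj ((F h).obj c.pt))) = U.obj (F'.obj c.pt) by
              have e1 := Functor.congr_obj (hF g) ((F h).obj c.pt)
              have e2 := Functor.congr_obj (hF h) c.pt
              simp only [Functor.comp_obj] at e1 e2
              rw [e1, e2]) ≫
            a := by
        rw [← Category.assoc, θ_natural, Category.assoc, ← Category.assoc (U.map _),
          θ_counit]
        simp [θ]
      rw [hL, hM, hR, ← ha (g * h)]
      simp only [θ, Category.assoc]
      rw [unit_conj' F' U adj]
    exact ⟨⟨c.pt, a, hunit, hassoc.symm⟩,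
      ⟨{ hom := ⟨𝟙 c.pt, by intro g; simpa [Φ] using (ha g).symm⟩
         inv := ⟨𝟙 c.pt, by intro g; simpa [Φ] using ha g⟩
         hom_inv_id := Subtype.ext (show 𝟙 c.pt ≫ 𝟙 c.pt = 𝟙 c.pt by simp)
         inv_hom_id := Subtype.ext (show 𝟙 c.pt ≫ 𝟙 c.pt = 𝟙 c.pt by simp) }⟩⟩

end
/-- Two adjunctions with the same right adjoint induce isomorphic monads. -/
def monadIso (L : X ⥤ Y) (adj2 : L ⊣ U) : adj.toMonad ≅ adj2.toMonad :=
  MonadIso.mk (Functor.isoWhiskerRight (Adjunction.leftAdjointUniq adj adj2) U)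
    (fun x => Adjunction.unit_leftAdjointUniq_hom_app adj adj2 x)
    (fun x => by
      have key : adj.counit.app (F'.obj x) ≫
          (Adjunction.leftAdjointUniq adj adj2).hom.app x =
          F'.map (U.map ((Adjunction.leftAdjointUniq adj adj2).hom.app x)) ≫
            (Adjunction.leftAdjointUniq adj adj2).hom.app (U.obj (L.obj x)) ≫
            adj2.counit.app (L.obj x) := by
        rw [← Category.assoc, (Adjunction.leftAdjointUniq adj adj2).hom.naturality,
          Category.assoc]
        erw [adj2.counit_naturality]
        rw [← Category.assoc,
          Adjunction.leftAdjointUniq_hom_app_counit]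
      change U.map (adj.counit.app (F'.obj x)) ≫ U.map ((Adjunction.leftAdjointUniq adj adj2).hom.app x) =
        (U.map (F'.map (U.map ((Adjunction.leftAdjointUniq adj adj2).hom.app x))) ≫
          U.map ((Adjunction.leftAdjointUniq adj adj2).hom.app (U.obj (L.obj x)))) ≫
          U.map (adj2.counit.app (L.obj x))
      rw [← U.map_comp, ← U.map_comp, ← U.map_comp]
      congr 1
      rw [Category.assoc]
      exact key)

end GaloisDescentAux

/-- Let `(F' ⊣ U, η, ε)` be a `G`-Galois adjunction between a
`G`-category `X` with `G`-indexed coproducts and a category `Y`; that is,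
`F'(g(-)) = F'` for all `g`, each canonical morphism
`γ_x : ∐_{g} g(x) ⟶ U F'(x)` induced by the unit is an isomorphism, and `U` is
monadic. Then `Y` is equivalent to `Z¹(G,X)`, an object `y` corresponding to the
1-cocycle `(U y, (U(ε_y) ∘ η_{g(U y)})_{g})`. -/
theorem galois_adjunction_descent {Y : Type*} [Category Y]
    [HasColimitsOfShape (Discrete G) X]
    (F : G → X ⥤ X) (hone : F 1 = 𝟭 X) (hmul : ∀ g h : G, F (h * g) = F g ⋙ F h)
    (F' : X ⥤ Y) (U : Y ⥤ X) (adj : F' ⊣ U)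
    (hF : ∀ g : G, F g ⋙ F' = F')
    (hγ : ∀ x : X, IsIso (Sigma.desc fun g : G =>
      adj.unit.app ((F g).obj x) ≫ eqToHom (congrArg U.obj (Functor.congr_obj (hF g) x))))
    [MonadicRightAdjoint U] :
    ∃ e : Y ≌ Cocycle F hone hmul,
      ∃ hpt : ∀ y : Y, (e.functor.obj y).pt = U.obj y,
        ∀ (y : Y) (g : G),
          (e.functor.obj y).ξ g =
            eqToHom (by rw [hpt y]; rfl) ≫
              (adj.unit.app ((F g).obj (U.obj y)) ≫
                eqToHom (congrArg U.obj (Functor.congr_obj (hF g) (U.obj y))) ≫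
                U.map (adj.counit.app y)) ≫ eqToHom (hpt y).symm := by
  haveI hFaith := GaloisDescentAux.Φ_faithful F F' U adj hF hone hmul
  haveI hFull := GaloisDescentAux.Φ_full F F' U adj hF hone hmul (fun x => hγ x)
  haveI hSurj := GaloisDescentAux.Φ_essSurj F F' U adj hF hone hmul (fun x => hγ x)
  haveI : (GaloisDescentAux.Φ F F' U adj hF hone hmul).IsEquivalence := ⟨hFaith, hFull, hSurj⟩
  haveI : (Monad.algebraFunctorOfMonadHom
      (GaloisDescentAux.monadIso F' U adj (monadicLeftAdjoint U)
        (monadicAdjunction U)).hom).IsEquivalence :=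
    (Monad.algebraEquivOfIsoMonads
      (GaloisDescentAux.monadIso F' U adj (monadicLeftAdjoint U)
        (monadicAdjunction U)).symm).isEquivalence_functor
  refine ⟨Functor.asEquivalence (Monad.comparison (monadicAdjunction U) ⋙
      Monad.algebraFunctorOfMonadHom
        (GaloisDescentAux.monadIso F' U adj (monadicLeftAdjoint U) (monadicAdjunction U)).hom ⋙
      GaloisDescentAux.Φ F F' U adj hF hone hmul), fun _ => rfl, fun y g => ?_⟩
  have hc : U.map ((Adjunction.leftAdjointUniq adj (monadicAdjunction U)).hom.app (U.obj y)) ≫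
      U.map ((monadicAdjunction U).counit.app y) = U.map (adj.counit.app y) := by
    rw [← U.map_comp, Adjunction.leftAdjointUniq_hom_app_counit]
  change GaloisDescentAux.θ F F' U adj hF g (U.obj y) ≫
      (U.map ((Adjunction.leftAdjointUniq adj (monadicAdjunction U)).hom.app (U.obj y)) ≫
        U.map ((monadicAdjunction U).counit.app y)) =
    eqToHom (rfl : (F g).obj (U.obj y) = (F g).obj (U.obj y)) ≫
      (adj.unit.app ((F g).obj (U.obj y)) ≫
        eqToHom (congrArg U.obj (Functor.congr_obj (hF g) (U.obj y))) ≫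
        U.map (adj.counit.app y)) ≫ eqToHom (rfl : U.obj y = U.obj y)
  rw [hc, eqToHom_refl, eqToHom_refl, Category.id_comp, Category.comp_id]
  simp [GaloisDescentAux.θ]
end

section
/- Let p : B → E be a homomorphism of nontrivial commutative rings, G a group acting on E on the right by ring automorphisms fixing the image of p. For each E-module D, define γ_D : E ⊗_B D → (G → D) by γ_D(e ⊗ d)(g) = (e·g)·d, where D on the target has the twisted E-module structure. If the map h : E ⊗_B E → (G → E), h(e ⊗ e')(g) = (e·g)·e', is bijective and γ_D is bijective for every E-module D, then G is finite. -/
open scoped TensorProduct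

universe u

/-- Let `p : B → E` be a homomorphism of nontrivial commutative rings
(encoded as `Algebra B E`), `G` a group acting on `E` on the right by ring
automorphisms fixing the image of `p`. If the map `h : E ⊗_B E → (G → E)`,
`h(e ⊗ e')(g) = (e·g)·e'`, is bijective and, for every `E`-module `D`, the map
`γ_D : E ⊗_B D → (G → D)`, `γ_D(e ⊗ d)(g) = (e·g)·d`, is bijective, then `G` is
finite. -/
theorem galois_maps_bijective_implies_finite {G : Type*} [Group G]
    {B E : Type u} [CommRing B] [CommRing E] [Nontrivial B] [Nontrivial E] [Algebra B E]
    (act : G → E ≃+* E)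
    (hact1 : act 1 = RingEquiv.refl E)
    (hactmul : ∀ g h : G, act (g * h) = (act g).trans (act h))
    (hfix : ∀ (g : G) (b : B), act g (algebraMap B E b) = algebraMap B E b)
    (hh : ∀ f : (E ⊗[B] E) →+ (G → E),
      (∀ (e e' : E) (g : G), f (e ⊗ₜ[B] e') g = act g e * e') → Function.Bijective f)
    (hγ : ∀ (D : Type u) [AddCommGroup D] [Module B D] [Module E D] [IsScalarTower B E D],
      ∀ f : (E ⊗[B] D) →+ (G → D),
        (∀ (e : E) (d : D) (g : G), f (e ⊗ₜ[B] d) g = act g e • d) →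
          Function.Bijective f) :
    Finite G := by
  classical
  by_contra hG
  rw [not_finite_iff_infinite] at hG
  obtain ⟨ι, hι⟩ := Infinite.natEmbedding G
  -- the bilinear map
  let bil : E →ₗ[B] (ℕ →₀ E) →ₗ[B] (G → (ℕ →₀ E)) :=
    { toFun := fun e =>
        { toFun := fun d g => act g e • d
          map_add' := fun d d' => by funext g; simp [smul_add]
          map_smul' := fun r d => by
            funext g
            simp only [RingHom.id_apply, Pi.smul_apply]
            rw [← algebraMap_smul E r d, ← algebraMap_smul E r (act g e • d),
              smul_smul, smul_smul, mul_comm] }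
      map_add' := fun e e' => by
        refine LinearMap.ext fun d => funext fun g => ?_
        simp [add_smul]
      map_smul' := fun r e => by
        refine LinearMap.ext fun d => funext fun g => ?_
        simp only [RingHom.id_apply, LinearMap.coe_mk, AddHom.coe_mk, LinearMap.smul_apply,
          Pi.smul_apply]
        rw [Algebra.smul_def, map_mul, hfix, ← smul_smul, algebraMap_smul] }
  let L := TensorProduct.lift bil
  have hL : ∀ (e : E) (d : ℕ →₀ E) (g : G), L.toAddMonoidHom (e ⊗ₜ[B] d) g = act g e • d :=
    fun e d g => rfl
  have hsurj := (hγ (ℕ →₀ E) L.toAddMonoidHom hL).2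
  -- target function
  set F : G → (ℕ →₀ E) := fun g =>
    if h : ∃ n, ι n = g then Finsupp.single h.choose 1 else 0 with hF
  obtain ⟨x, hx⟩ := hsurj F
  have hFι : ∀ n : ℕ, F (ι n) = Finsupp.single n 1 := by
    intro n
    have hex : ∃ m, ι m = ι n := ⟨n, rfl⟩
    have h1 : ι hex.choose = ι n := hex.choose_spec
    have h2 : hex.choose = n := hι h1
    simp [hF, dif_pos hex, h2]
  -- support bound
  have hsupp : ∀ y : E ⊗[B] (ℕ →₀ E), ∃ s : Finset ℕ, ∀ g : G, (L y g).support ⊆ s := by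
    intro y
    induction y using TensorProduct.induction_on with
    | zero => exact ⟨∅, fun g => by simp⟩
    | tmul e d =>
        exact ⟨d.support, fun g => Finsupp.support_smul⟩
    | add y z hy hz =>
        obtain ⟨s, hs⟩ := hy
        obtain ⟨t, ht⟩ := hz
        refine ⟨s ∪ t, fun g => ?_⟩
        rw [map_add]
        exact (Finsupp.support_add).trans (Finset.union_subset_union (hs g) (ht g))
  obtain ⟨s, hs⟩ := hsupp x
  have : ∀ n : ℕ, n ∈ s := by
    intro n
    have h1 : L x (ι n) = Finsupp.single n 1 := by
      have := congrFun hx (ι n)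
      rw [hFι n] at this
      exact this
    have h2 : (L x (ι n)).support = {n} := by
      rw [h1, Finsupp.support_single_ne_zero _ one_ne_zero]
    have := hs (ι n)
    rw [h2] at this
    exact this (Finset.mem_singleton_self n)
  obtain ⟨n, hn⟩ := s.exists_notMem
  exact hn (this n)
end

section
/- Let p : B → E be a G-Galois extension of commutative rings (G finite, acting on E by B-algebra automorphisms, with B ≅ E^G and the map h : E ⊗_B E → (G → E), h(e⊗e')(g) = g(e)·e', bijective). Then for every B-module A, the E-module E ⊗_B A with the G-action g·(e ⊗ a) = g(e) ⊗ a has fixed points (E ⊗_B A)^G isomorphic as a B-module to A via a ↦ 1 ⊗ a. -/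
open scoped TensorProduct

universe u

/-- Let `p : B → E` be a `G`-Galois extension of commutative rings in
the sense of Chase–Harrison–Rosenberg (`G` finite, acting by ring automorphisms
fixing `p(B)` pointwise, `p` inducing `B ≅ E^G`, and `h : E ⊗_B E → (G → E)`,
`h(e⊗e')(g) = g(e)·e'`, bijective). Then for every `B`-module `A`, the `G`-action
on `E ⊗_B A` given by `g·(e ⊗ a) = g(e) ⊗ a` has fixed points isomorphic to `A`
via `a ↦ 1 ⊗ a`: this map is injective with image exactly the fixed points. -/
theorem galois_descent_fixed_points {G : Type*} [Group G] [Finite G]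
    {B E : Type u} [CommRing B] [CommRing E] [Nontrivial B] [Nontrivial E] [Algebra B E]
    (act : G → E ≃+* E)
    (hact1 : act 1 = RingEquiv.refl E)
    (hactmul : ∀ g h : G, act (g * h) = (act g).trans (act h))
    (hfix : ∀ (g : G) (b : B), act g (algebraMap B E b) = algebraMap B E b)
    (hinj : Function.Injective (algebraMap B E))
    (hfixed : ∀ e : E, (∀ g : G, act g e = e) ↔ ∃ b : B, algebraMap B E b = e)
    (hh : ∀ f : (E ⊗[B] E) →+ (G → E),
      (∀ (e e' : E) (g : G), f (e ⊗ₜ[B] e') g = act g e * e') → Function.Bijective f)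
    (A : Type u) [AddCommGroup A] [Module B A]
    (σ : G → (E ⊗[B] A) →+ (E ⊗[B] A))
    (hσ : ∀ (g : G) (e : E) (a : A), σ g (e ⊗ₜ[B] a) = act g e ⊗ₜ[B] a) :
    Function.Injective (fun a : A => (1 : E) ⊗ₜ[B] a) ∧
    (∀ t : E ⊗[B] A, (∀ g : G, σ g t = t) ↔ ∃ a : A, (1 : E) ⊗ₜ[B] a = t) := by
  classical
  cases nonempty_fintype G
  -- the trace into E
  set tr : E → E := fun e => ∑ g : G, act g e with htr
  have tr_fixed : ∀ (h : G) (e : E), act h (tr e) = tr e := by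
    intro h e
    have h1 : act h (tr e) = ∑ g : G, act (g * h) e := by
      simp only [htr, map_sum]
      refine Finset.sum_congr rfl fun g _ => ?_
      rw [hactmul]; rfl
    rw [h1]
    exact Equiv.sum_comp (Equiv.mulRight h) (fun g => act g e)
  have exT : ∀ e : E, ∃ b : B, algebraMap B E b = tr e := fun e =>
    (hfixed (tr e)).mp (fun h => tr_fixed h e)
  choose T hT using exT
  have T_add : ∀ e e', T (e + e') = T e + T e' := by
    intro e e'
    apply hinj
    rw [map_add, hT, hT, hT]
    simp [htr, Finset.sum_add_distrib]
  have tr_smul : ∀ (b : B) (e : E), tr (algebraMap B E b * e) = algebraMap B E b * tr e := by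
    intro b e
    simp only [htr, Finset.mul_sum]
    exact Finset.sum_congr rfl fun g _ => by rw [map_mul, hfix]
  have T_smul : ∀ (b : B) (e : E), T (algebraMap B E b * e) = b * T e := by
    intro b e
    apply hinj
    rw [hT, map_mul, hT, tr_smul]
  -- T as a linear map
  let Tl : E →ₗ[B] B :=
    { toFun := T
      map_add' := T_add
      map_smul' := fun b e => by
        simp only [RingHom.id_apply, smul_eq_mul]
        rw [Algebra.smul_def, T_smul] }
  -- the Galois map h and Galois coordinates
  let F : E ⊗[B] E →ₗ[B] (G → E) :=
    TensorProduct.lift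
      { toFun := fun e =>
          { toFun := fun e' g => act g e * e'
            map_add' := fun x y => by ext g; simp [mul_add]
            map_smul' := fun b x => by ext g; simp [Algebra.smul_def, mul_left_comm] }
        map_add' := fun x y => by ext e' g; simp [add_mul]
        map_smul' := fun b x => by
          ext e' g
          simp [Algebra.smul_def, map_mul, hfix, mul_assoc] }
  have hF := hh F.toAddMonoidHom (fun e e' g => rfl)
  obtain ⟨z, hz⟩ := hF.2 (fun g => if g = 1 then (1 : E) else 0)
  obtain ⟨S, hS⟩ := TensorProduct.exists_finset z
  have idA : ∀ g : G, ∑ p ∈ S, act g p.1 * p.2 = if g = 1 then (1 : E) else 0 := by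
    intro g
    have : F z g = if g = 1 then (1 : E) else 0 := by
      rw [show F z = _ from hz]
    rw [hS, map_sum] at this
    simp only [Finset.sum_apply] at this
    exact this
  have idB : ∀ g : G, ∑ p ∈ S, p.1 * act g p.2 = if g = 1 then (1 : E) else 0 := by
    intro g
    have h1 := idA g⁻¹
    have h2 := congrArg (act g) h1
    rw [map_sum] at h2
    have h3 : ∀ p ∈ S, act g (act g⁻¹ p.1 * p.2) = p.1 * act g p.2 := by
      intro p _
      rw [map_mul]
      congr 1
      have : act (g⁻¹ * g) p.1 = act g (act g⁻¹ p.1) := by rw [hactmul]; rfl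
      rw [← this, inv_mul_cancel, hact1]; rfl
    rw [Finset.sum_congr rfl h3] at h2
    rw [h2]
    by_cases hg : g = 1 <;> simp [hg]
  -- key identity : ∑ p.1 * algebraMap (T p.2) = 1
  have key1 : ∑ p ∈ S, p.1 * algebraMap B E (T p.2) = 1 := by
    have h0 : ∑ p ∈ S, p.1 * tr p.2 = 1 := by
      have h1 : ∑ p ∈ S, p.1 * tr p.2 = ∑ g : G, ∑ p ∈ S, p.1 * act g p.2 := by
        simp only [htr, Finset.mul_sum]
        exact Finset.sum_comm
      rw [h1]
      simp only [idB]
      simp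
    simpa only [hT] using h0
  -- decomposition of the trace through finitely many generators
  have Tdecomp : ∀ e : E, T e = ∑ p ∈ S, T p.2 * T (p.1 * e) := by
    intro e
    have he : e = ∑ p ∈ S, algebraMap B E (T p.2) * (p.1 * e) := by
      calc e = (∑ p ∈ S, p.1 * algebraMap B E (T p.2)) * e := by rw [key1, one_mul]
        _ = ∑ p ∈ S, algebraMap B E (T p.2) * (p.1 * e) := by
            rw [Finset.sum_mul]
            exact Finset.sum_congr rfl fun p _ => by ring
    conv_lhs => rw [he]
    rw [show T (∑ p ∈ S, algebraMap B E (T p.2) * (p.1 * e))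
        = Tl (∑ p ∈ S, algebraMap B E (T p.2) * (p.1 * e)) from rfl, map_sum]
    exact Finset.sum_congr rfl fun p _ => T_smul _ _
  -- the trace ideal
  set J : Ideal B := Ideal.span ((fun p : E × E => T p.2) '' ↑S) with hJ
  have hgen : ∀ p ∈ S, T p.2 ∈ J := fun p hp => Ideal.subset_span ⟨p, hp, rfl⟩
  have hrange : ∀ e : E, T e ∈ J := fun e => by
    rw [Tdecomp e]
    exact Ideal.sum_mem _ fun p hp => Ideal.mul_mem_right _ _ (hgen p hp)
  have hle : J ≤ J • J := by
    rw [hJ, Ideal.span_le]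
    rintro x ⟨p, hp, rfl⟩
    show T p.2 ∈ J • J
    rw [smul_eq_mul, Tdecomp p.2]
    exact Ideal.sum_mem _ fun q hq => Ideal.mul_mem_mul (hgen q hq) (hrange _)
  have hfg : J.FG := by
    refine ⟨Finset.image (fun p : E × E => T p.2) S, ?_⟩
    rw [Finset.coe_image, hJ]
  obtain ⟨r, hr1, hr2⟩ :=
    Submodule.exists_sub_one_mem_and_smul_eq_zero_of_fg_of_le_smul J J hfg hle
  have he1 : (1 : B) - r ∈ J := by
    have := J.neg_mem hr1
    simpa using this
  have hxJ : ∀ x ∈ J, (1 - r) * x = x := by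
    intro x hx
    have h2 := hr2 x hx
    rw [smul_eq_mul] at h2
    rw [sub_mul, one_mul, h2, sub_zero]
  have halg : algebraMap B E (1 - r) = 1 := by
    have h2 : (1 : E) = ∑ p ∈ S, p.1 * algebraMap B E ((1 - r) * T p.2) := by
      rw [← key1]
      exact Finset.sum_congr rfl fun p hp => by rw [hxJ _ (hgen p hp)]
    calc algebraMap B E (1 - r) = algebraMap B E (1 - r) * 1 := (mul_one _).symm
      _ = algebraMap B E (1 - r) * ∑ p ∈ S, p.1 * algebraMap B E ((1 - r) * T p.2) := by
          rw [← h2]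
      _ = ∑ p ∈ S, p.1 * algebraMap B E ((1 - r) * ((1 - r) * T p.2)) := by
          rw [Finset.mul_sum]
          refine Finset.sum_congr rfl fun p _ => ?_
          simp only [map_mul]
          ring
      _ = ∑ p ∈ S, p.1 * algebraMap B E ((1 - r) * T p.2) := by
          refine Finset.sum_congr rfl fun p hp => ?_
          rw [hxJ _ (J.mul_mem_left _ (hgen p hp))]
      _ = 1 := h2.symm
  have hone : (1 : B) ∈ J := by
    have h3 : (1 : B) - r = 1 := hinj (by rw [halg, map_one])
    rw [← h3]; exact he1
  have hw' : (1 : B) ∈ LinearMap.range Tl := by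
    have hsub : J ≤ LinearMap.range Tl := by
      rw [hJ, Ideal.span_le]
      rintro x ⟨p, hp, rfl⟩
      exact ⟨p.2, rfl⟩
    exact hsub hone
  obtain ⟨w, hw⟩ := hw'
  have hTw : T w = 1 := hw
  have htrw : (∑ g : G, act g w) = 1 := by
    rw [show (∑ g : G, act g w) = tr w from rfl, ← hT, hTw, map_one]
  -- retraction of a ↦ 1 ⊗ a
  let Rt : E ⊗[B] A →ₗ[B] A :=
    TensorProduct.lift
      { toFun := fun e =>
          { toFun := fun a => T (e * w) • a
            map_add' := fun x y => smul_add _ _ _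
            map_smul' := fun b x => by
              simp only [RingHom.id_apply]
              exact smul_comm _ b x }
        map_add' := fun x y => by
          ext a
          show T ((x + y) * w) • a = T (x * w) • a + T (y * w) • a
          rw [add_mul, T_add, add_smul]
        map_smul' := fun b x => by
          ext a
          show T ((b • x) * w) • a = b • (T (x * w) • a)
          rw [Algebra.smul_def, mul_assoc, T_smul, mul_smul] }
  have hR : ∀ a : A, Rt ((1 : E) ⊗ₜ[B] a) = a := by
    intro a
    show T (1 * w) • a = a
    rw [one_mul, hTw, one_smul]
  constructor
  · intro a a' hA
    have := congrArg Rt hA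
    simpa only [hR] using this
  · intro u
    constructor
    · intro hu
      obtain ⟨S', hS'⟩ := TensorProduct.exists_finset u
      refine ⟨∑ p ∈ S', T (p.1 * w) • p.2, ?_⟩
      have step1 : (1 : E) ⊗ₜ[B] (∑ p ∈ S', T (p.1 * w) • p.2)
          = ∑ p ∈ S', (∑ g : G, act g p.1 * act g w) ⊗ₜ[B] p.2 := by
        rw [TensorProduct.tmul_sum]
        refine Finset.sum_congr rfl fun p _ => ?_
        rw [TensorProduct.tmul_smul, TensorProduct.smul_tmul', Algebra.smul_def, mul_one,
          hT]
        congr 1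
        simp only [htr]
        exact Finset.sum_congr rfl fun g _ => by rw [map_mul]
      rw [step1]
      have step2 : ∑ p ∈ S', (∑ g : G, act g p.1 * act g w) ⊗ₜ[B] p.2
          = ∑ g : G, act g w • u := by
        have : ∀ p ∈ S', (∑ g : G, act g p.1 * act g w) ⊗ₜ[B] p.2
            = ∑ g : G, act g w • (act g p.1 ⊗ₜ[B] p.2) := by
          intro p _
          rw [TensorProduct.sum_tmul]
          refine Finset.sum_congr rfl fun g _ => ?_
          rw [TensorProduct.smul_tmul', smul_eq_mul, mul_comm]
        rw [Finset.sum_congr rfl this, Finset.sum_comm]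
        refine Finset.sum_congr rfl fun g _ => ?_
        rw [← Finset.smul_sum]
        congr 1
        have h4 : σ g u = ∑ p ∈ S', act g p.1 ⊗ₜ[B] p.2 := by
          conv_lhs => rw [hS']
          rw [map_sum]
          exact Finset.sum_congr rfl fun p _ => hσ g p.1 p.2
        rw [← h4, hu g]
      rw [step2, ← Finset.sum_smul, htrw, one_smul]
    · rintro ⟨a, rfl⟩ g
      rw [hσ, map_one]
end

section
/- Let p : B → E be a G-Galois extension of commutative rings. Then the category of B-modules is equivalent to the category of E-modules D equipped with a (semilinear) right G-action satisfying (e·d)·g = (e·g)·(d·g), with morphisms the G-equivariant E-module maps; one direction sends a B-module A to E ⊗_B A with (e ⊗ a)·g = (e·g) ⊗ a, and the other sends (D, action) to the fixed B-module D^G. -/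
open scoped TensorProduct

universe u

variable {G : Type u} [Group G] {B E : Type u} [CommRing B] [CommRing E] [Algebra B E]

/-- An `E`-module with a semilinear right `G`-action: `(e·d)·g = (e·g)·(d·g)`. -/
structure SemilinearGMod (G : Type u) [Group G] (B E : Type u) [CommRing B] [CommRing E]
    [Algebra B E] (act : G → E ≃+* E) : Type (u + 1) where
  carrier : Type u
  [isAddCommGroup : AddCommGroup carrier]
  [isModule : Module E carrier]
  ρ : G → carrier →+ carrier
  ρ_one : ρ 1 = AddMonoidHom.id carrier
  ρ_mul : ∀ g h : G, ρ (g * h) = (ρ h).comp (ρ g)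
  ρ_smul : ∀ (g : G) (e : E) (d : carrier), ρ g (e • d) = act g e • ρ g d

attribute [instance] SemilinearGMod.isAddCommGroup SemilinearGMod.isModule

/-- The category of `E`-modules with semilinear `G`-action: morphisms are
`G`-equivariant `E`-linear maps. -/
instance SemilinearGMod.category (act : G → E ≃+* E) :
    CategoryTheory.Category (SemilinearGMod G B E act) where
  Hom D D' := {f : D.carrier →ₗ[E] D'.carrier // ∀ (g : G) (d : D.carrier),
    f (D.ρ g d) = D'.ρ g (f d)}
  id D := ⟨LinearMap.id, fun _ _ => rfl⟩
  comp f k := ⟨k.1.comp f.1, by intro g d; simp [f.2 g d, k.2 g]⟩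
  id_comp f := by apply Subtype.ext; simp
  comp_id f := by apply Subtype.ext; simp
  assoc f k l := by apply Subtype.ext; simp [LinearMap.comp_assoc]

/-- The action of `g` on `E` as a `B`-linear map (it fixes `B`). -/
def actLin (act : G → E ≃+* E)
    (hfix : ∀ (g : G) (b : B), act g (algebraMap B E b) = algebraMap B E b)
    (g : G) : E →ₗ[B] E where
  toFun := act g
  map_add' := (act g).map_add
  map_smul' := by intro b e; simp [Algebra.smul_def, map_mul, hfix]

/-- The standard semilinear action of `g` on `E ⊗_B A`, i.e. `(e ⊗ a)·g = (e·g) ⊗ a`. -/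
noncomputable def tensorAct (act : G → E ≃+* E)
    (hfix : ∀ (g : G) (b : B), act g (algebraMap B E b) = algebraMap B E b)
    (A : Type u) [AddCommGroup A] [Module B A] (g : G) :
    E ⊗[B] A →ₗ[B] E ⊗[B] A :=
  LinearMap.rTensor A (actLin act hfix g)

namespace GaloisDescentAux

open TensorProduct

set_option linter.unusedSectionVars false

/-- Bundles the hypotheses on the action as a (Prop-valued) class for instance management. -/
class ActFacts (act : G → E ≃+* E) : Prop where
  one : act 1 = RingEquiv.refl E
  mul : ∀ g h : G, act (g * h) = (act g).trans (act h)
  fix : ∀ (g : G) (b : B), act g (algebraMap B E b) = algebraMap B E b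

variable (act : G → E ≃+* E) [facts : ActFacts (B := B) act]

include B facts in
lemma act_act (g h : G) (e : E) : act h (act g e) = act (g * h) e := by
  rw [ActFacts.mul (B := B) (act := act) g h]; rfl

include B facts in
lemma act_one_apply (e : E) : act 1 e = e := by rw [ActFacts.one (B := B) (act := act)]; rfl

section hfixlemmas

variable (hfix : ∀ (g : G) (b : B), act g (algebraMap B E b) = algebraMap B E b)

lemma tensorAct_tmul (A : Type u) [AddCommGroup A] [Module B A] (g : G) (e : E) (a : A) :
    tensorAct act hfix A g (e ⊗ₜ[B] a) = act g e ⊗ₜ[B] a := rfl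

lemma tensorAct_smul (A : Type u) [AddCommGroup A] [Module B A] (g : G) (e : E)
    (d : E ⊗[B] A) :
    tensorAct act hfix A g (e • d) = act g e • tensorAct act hfix A g d := by
  induction d using TensorProduct.induction_on with
  | zero => simp
  | tmul e' a =>
      rw [smul_tmul', tensorAct_tmul, tensorAct_tmul, smul_tmul']
      simp [smul_eq_mul, map_mul]
  | add x y hx hy => simp only [smul_add, map_add, hx, hy]

-- The functor `A ↦ E ⊗[B] A` on objects.
include facts in
noncomputable def Fobj (A : Type u) [AddCommGroup A] [Module B A] :
    SemilinearGMod G B E act where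
  carrier := E ⊗[B] A
  ρ g := (tensorAct act hfix A g).toAddMonoidHom
  ρ_one := by
    haveI := facts
    apply AddMonoidHom.ext; intro d
    induction d using TensorProduct.induction_on with
    | zero => simp
    | tmul e a =>
        show act 1 e ⊗ₜ[B] a = e ⊗ₜ[B] a
        rw [act_one_apply (B := B)]
    | add x y hx hy =>
        simp only [map_add] at hx hy ⊢
        rw [hx, hy]
  ρ_mul g h := by
    apply AddMonoidHom.ext; intro d
    induction d using TensorProduct.induction_on with
    | zero => simp
    | tmul e a =>
        show act (g * h) e ⊗ₜ[B] a = act h (act g e) ⊗ₜ[B] a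
        rw [act_act (B := B)]
    | add x y hx hy =>
        simp only [map_add] at hx hy ⊢
        rw [hx, hy]
  ρ_smul g e d := tensorAct_smul act hfix _ g e d

-- Fixed points
def fixedSet (D : SemilinearGMod G B E act) : AddSubgroup D.carrier where
  carrier := {d | ∀ g : G, D.ρ g d = d}
  add_mem' := fun {x y} hx hy g => by rw [map_add, hx g, hy g]
  zero_mem' := fun g => by rw [map_zero]
  neg_mem' := fun {x} hx g => by rw [map_neg, hx g]

lemma mem_fixedSet {D : SemilinearGMod G B E act} {d : D.carrier} :
    d ∈ fixedSet act D ↔ ∀ g : G, D.ρ g d = d := Iff.rfl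

instance fixedSMul (D : SemilinearGMod G B E act) : SMul B ↥(fixedSet act D) :=
  ⟨fun b d => ⟨algebraMap B E b • d.1, fun g => by
    rw [D.ρ_smul, ActFacts.fix (act := act), d.2 g]⟩⟩

@[simp] lemma fixedSMul_val (D : SemilinearGMod G B E act) (b : B) (d : ↥(fixedSet act D)) :
    (b • d).1 = algebraMap B E b • d.1 := rfl

instance fixedModule (D : SemilinearGMod G B E act) : Module B ↥(fixedSet act D) where
  one_smul d := Subtype.ext (by show algebraMap B E 1 • d.1 = d.1; simp)
  mul_smul b b' d := Subtype.ext (by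
    show algebraMap B E (b * b') • d.1 = algebraMap B E b • (algebraMap B E b' • d.1)
    rw [map_mul, mul_smul])
  smul_zero b := Subtype.ext (by show algebraMap B E b • (0 : D.carrier) = 0; simp)
  smul_add b x y := Subtype.ext (by
    show algebraMap B E b • (x.1 + y.1) = algebraMap B E b • x.1 + algebraMap B E b • y.1
    rw [smul_add])
  add_smul b b' d := Subtype.ext (by
    show algebraMap B E (b + b') • d.1 = algebraMap B E b • d.1 + algebraMap B E b' • d.1
    rw [map_add, add_smul])
  zero_smul d := Subtype.ext (by show algebraMap B E 0 • d.1 = 0; simp)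

instance modB (D : SemilinearGMod G B E act) : Module B D.carrier :=
  Module.compHom D.carrier (algebraMap B E)

@[simp] lemma modB_smul_def (D : SemilinearGMod G B E act) (b : B) (d : D.carrier) :
    b • d = algebraMap B E b • d := rfl

instance towerB (D : SemilinearGMod G B E act) : IsScalarTower B E D.carrier :=
  ⟨fun b e d => by
    show (b • e) • d = algebraMap B E b • (e • d)
    rw [Algebra.smul_def, mul_smul]⟩

def inclFixed (D : SemilinearGMod G B E act) : ↥(fixedSet act D) →ₗ[B] D.carrier where
  toFun := Subtype.val
  map_add' := fun _ _ => rfl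
  map_smul' := fun _ _ => rfl

noncomputable def counit (D : SemilinearGMod G B E act) :
    (E ⊗[B] ↥(fixedSet act D)) →ₗ[E] D.carrier :=
  (inclFixed act D).liftBaseChange E

@[simp] lemma counit_tmul (D : SemilinearGMod G B E act) (e : E) (d : ↥(fixedSet act D)) :
    counit act D (e ⊗ₜ[B] d) = e • d.1 := rfl

include facts in
lemma one_tmul_mem_fixed (A : Type u) [AddCommGroup A] [Module B A] (a : A) :
    ((1:E) ⊗ₜ[B] a) ∈ fixedSet act (Fobj act hfix A) := by
  intro g
  show tensorAct act hfix A g ((1:E) ⊗ₜ[B] a) = (1:E) ⊗ₜ[B] a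
  rw [tensorAct_tmul, map_one]

noncomputable def unitMap (A : Type u) [AddCommGroup A] [Module B A] :
    A →ₗ[B] ↥(fixedSet act (Fobj act hfix A)) where
  toFun a := ⟨(1:E) ⊗ₜ[B] a, one_tmul_mem_fixed act hfix A a⟩
  map_add' x y := Subtype.ext (TensorProduct.tmul_add _ x y)
  map_smul' b a := Subtype.ext (by
    show (1:E) ⊗ₜ[B] (b • a) = algebraMap B E b • ((1:E) ⊗ₜ[B] a)
    rw [TensorProduct.tmul_smul, algebraMap_smul])

include facts in
lemma counit_equivariant (D : SemilinearGMod G B E act) (g : G)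
    (x : E ⊗[B] ↥(fixedSet act D)) :
    counit act D (tensorAct act hfix (↥(fixedSet act D)) g x) = D.ρ g (counit act D x) := by
  induction x using TensorProduct.induction_on with
  | zero => simp
  | tmul e d =>
      rw [tensorAct_tmul, counit_tmul, counit_tmul, D.ρ_smul, d.2 g]
  | add x y hx hy => simp only [map_add, hx, hy]

open CategoryTheory

include facts in
lemma baseChange_equivariant {A A' : Type u} [AddCommGroup A] [Module B A]
    [AddCommGroup A'] [Module B A'] (f : A →ₗ[B] A') (g : G) (d : E ⊗[B] A) :
    LinearMap.baseChange E f (tensorAct act hfix A g d)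
      = tensorAct act hfix A' g (LinearMap.baseChange E f d) := by
  induction d using TensorProduct.induction_on with
  | zero => simp
  | tmul e a =>
      rw [tensorAct_tmul, LinearMap.baseChange_tmul, LinearMap.baseChange_tmul, tensorAct_tmul]
  | add x y hx hy => simp only [map_add, hx, hy]

noncomputable def Ffunctor : ModuleCat.{u} B ⥤ SemilinearGMod G B E act where
  obj A := Fobj act hfix A
  map {A A'} f := ⟨LinearMap.baseChange E f.hom, fun g d => baseChange_equivariant act hfix f.hom g d⟩
  map_id A := Subtype.ext LinearMap.baseChange_id
  map_comp {A A' A''} f f' := Subtype.ext (LinearMap.baseChange_comp f.hom f'.hom)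

noncomputable def Gfunctor : SemilinearGMod G B E act ⥤ ModuleCat.{u} B where
  obj D := ModuleCat.of B ↥(fixedSet act D)
  map {D D'} f := ModuleCat.ofHom
    { toFun := fun d => ⟨f.1 d.1, fun g => by rw [← f.2 g, d.2 g]⟩
      map_add' := fun x y => Subtype.ext (f.1.map_add x.1 y.1)
      map_smul' := fun b x => Subtype.ext (f.1.map_smul (algebraMap B E b) x.1) }
  map_id D := ModuleCat.hom_ext (LinearMap.ext fun d => Subtype.ext rfl)
  map_comp f f' := ModuleCat.hom_ext (LinearMap.ext fun d => Subtype.ext rfl)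

section trace

open Finset

variable [Fintype G] [DecidableEq G]

include B facts in
lemma sum_act_fixed (e : E) (h : G) : act h (∑ g : G, act g e) = ∑ g : G, act g e := by
  rw [map_sum]
  exact Fintype.sum_equiv (Equiv.mulRight h) _ _ (fun g => act_act (B := B) act g h e)

variable (hfixed : ∀ e : E, (∀ g : G, act g e = e) ↔ ∃ b : B, algebraMap B E b = e)

noncomputable def trB (e : E) : B :=
  ((hfixed (∑ g : G, act g e)).mp (fun h => sum_act_fixed (B := B) act e h)).choose

lemma trB_spec (e : E) : algebraMap B E (trB act hfixed e) = ∑ g : G, act g e :=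
  ((hfixed (∑ g : G, act g e)).mp (fun h => sum_act_fixed (B := B) act e h)).choose_spec

variable (hinj : Function.Injective (algebraMap B E))

include hinj in
lemma trB_eq {e : E} {b : B} (hb : algebraMap B E b = ∑ g : G, act g e) :
    trB act hfixed e = b := hinj ((trB_spec act hfixed e).trans hb.symm)

include hinj in
lemma trB_add (e e' : E) :
    trB act hfixed (e + e') = trB act hfixed e + trB act hfixed e' := by
  refine trB_eq act hfixed hinj ?_
  rw [map_add, trB_spec, trB_spec, ← Finset.sum_add_distrib]
  exact Finset.sum_congr rfl fun g _ => (map_add _ _ _).symm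

include hinj in
lemma trB_mul_algebraMap (b : B) (e : E) :
    trB act hfixed (algebraMap B E b * e) = b * trB act hfixed e := by
  refine trB_eq act hfixed hinj ?_
  rw [map_mul, trB_spec, Finset.mul_sum]
  exact Finset.sum_congr rfl fun g _ => by rw [map_mul, ActFacts.fix (act := act)]

noncomputable def trLin : E →ₗ[B] B where
  toFun := trB act hfixed
  map_add' := trB_add act hfixed hinj
  map_smul' := fun b e => by
    show trB act hfixed (b • e) = b • trB act hfixed e
    rw [Algebra.smul_def, trB_mul_algebraMap act hfixed hinj, smul_eq_mul]

include facts in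
lemma exists_coords
    (hh : ∀ f : (E ⊗[B] E) →+ (G → E),
      (∀ (e e' : E) (g : G), f (e ⊗ₜ[B] e') g = act g e * e') → Function.Bijective f) :
    ∃ S : Finset (E × E), ∀ g : G,
      (∑ q ∈ S, act g q.1 * q.2) = if g = 1 then 1 else 0 := by
  classical
  let bil : E →ₗ[B] E →ₗ[B] (G → E) :=
    { toFun := fun e =>
        { toFun := fun e' g => act g e * e'
          map_add' := fun x y => funext fun g => mul_add _ _ _
          map_smul' := fun b x => funext fun g => by
            show act g e * (b • x) = b • (act g e * x)
            rw [Algebra.smul_def, Algebra.smul_def]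
            ring }
      map_add' := fun x y => LinearMap.ext fun e' => funext fun g => by
        show act g (x + y) * e' = act g x * e' + act g y * e'
        rw [map_add, add_mul]
      map_smul' := fun b x => LinearMap.ext fun e' => funext fun g => by
        show act g (b • x) * e' = b • (act g x * e')
        rw [Algebra.smul_def, Algebra.smul_def, map_mul, ActFacts.fix (act := act)]
        ring }
  have hbij := hh (TensorProduct.lift bil).toAddMonoidHom (fun e e' g => rfl)
  obtain ⟨u, hu⟩ := hbij.2 (fun g => if g = 1 then 1 else 0)
  obtain ⟨S, rfl⟩ := TensorProduct.exists_finset u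
  refine ⟨S, fun g => ?_⟩
  have hu' : (∑ q ∈ S, (fun g : G => act g q.1 * q.2)) = fun g : G => if g = 1 then 1 else 0 := by
    rw [← hu]
    show _ = TensorProduct.lift bil (S.sum fun q => q.1 ⊗ₜ[B] q.2)
    rw [map_sum]
    rfl
  simpa [Finset.sum_apply] using congrFun hu' g

include facts in
lemma coords_symm {S : Finset (E × E)}
    (hS : ∀ g : G, (∑ q ∈ S, act g q.1 * q.2) = if g = 1 then 1 else 0) :
    ∀ g : G, (∑ q ∈ S, q.1 * act g q.2) = if g = 1 then 1 else 0 := by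
  intro g
  calc (∑ q ∈ S, q.1 * act g q.2)
      = ∑ q ∈ S, act g (act g⁻¹ q.1 * q.2) := by
        refine Finset.sum_congr rfl fun q _ => ?_
        rw [map_mul, act_act (B := B) act g⁻¹ g, inv_mul_cancel, act_one_apply (B := B)]
    _ = act g (if g⁻¹ = 1 then 1 else 0) := by rw [← map_sum, hS g⁻¹]
    _ = if g = 1 then 1 else 0 := by
        by_cases h : g = 1 <;> simp [h, inv_eq_one]

include hinj facts in
lemma coords_dual {S : Finset (E × E)}
    (hS2 : ∀ g : G, (∑ q ∈ S, q.1 * act g q.2) = if g = 1 then 1 else 0) (e : E) :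
    ∑ q ∈ S, q.1 * algebraMap B E (trB act hfixed (q.2 * e)) = e := by
  calc (∑ q ∈ S, q.1 * algebraMap B E (trB act hfixed (q.2 * e)))
      = ∑ q ∈ S, ∑ g : G, q.1 * (act g q.2 * act g e) := by
        refine Finset.sum_congr rfl fun q _ => ?_
        rw [trB_spec, Finset.mul_sum]
        exact Finset.sum_congr rfl fun g _ => by rw [map_mul]
    _ = ∑ g : G, (∑ q ∈ S, q.1 * act g q.2) * act g e := by
        rw [Finset.sum_comm]
        refine Finset.sum_congr rfl fun g _ => ?_
        rw [Finset.sum_mul]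
        exact Finset.sum_congr rfl fun q _ => (mul_assoc _ _ _).symm
    _ = ∑ g : G, if g = 1 then act g e else 0 := by
        refine Finset.sum_congr rfl fun g _ => ?_
        rw [hS2 g]
        split <;> simp
    _ = e := by
        rw [Finset.sum_ite_eq' Finset.univ (1 : G) (fun g => act g e)]
        simp [act_one_apply (B := B) act]

include hinj facts in
lemma exists_trace_one {S : Finset (E × E)}
    (hS2 : ∀ g : G, (∑ q ∈ S, q.1 * act g q.2) = if g = 1 then 1 else 0) :
    ∃ c : E, trB act hfixed c = 1 := by
  classical
  set I : Ideal B := LinearMap.range (trLin act hfixed hinj) with hI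
  have key : ∀ e : E, e = ∑ q ∈ S, trB act hfixed (q.2 * e) • q.1 := by
    intro e
    conv_lhs => rw [← coords_dual act hfixed hinj hS2 e]
    exact Finset.sum_congr rfl fun q _ => by rw [Algebra.smul_def, mul_comm]
  have hle : (⊤ : Submodule B E) ≤ I • (⊤ : Submodule B E) := by
    intro e _
    rw [key e]
    refine Submodule.sum_mem _ fun q _ => Submodule.smul_mem_smul ?_ trivial
    exact ⟨q.2 * e, rfl⟩
  have hfg : (⊤ : Submodule B E).FG := by
    refine ⟨S.image Prod.fst, le_antisymm le_top ?_⟩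
    intro e _
    rw [key e]
    refine Submodule.sum_mem _ fun q hq => Submodule.smul_mem _ _ ?_
    exact Submodule.subset_span (Finset.mem_coe.mpr (Finset.mem_image_of_mem Prod.fst hq))
  obtain ⟨r, hr1, hr0⟩ :=
    Submodule.exists_sub_one_mem_and_smul_eq_zero_of_fg_of_le_smul I ⊤ hfg hle
  have hr : r = 0 := by
    apply hinj
    have := hr0 (1 : E) trivial
    rw [Algebra.smul_def, mul_one] at this
    rw [this, map_zero]
  rw [hr, zero_sub] at hr1
  have h1 : (1 : B) ∈ I := by simpa using Submodule.neg_mem _ hr1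
  obtain ⟨c, hc⟩ := h1
  exact ⟨c, hc⟩

include facts hinj in
lemma unit_bijective (A : Type u) [AddCommGroup A] [Module B A]
    {c : E} (hc : trB act hfixed c = 1) :
    Function.Bijective (unitMap act hfix A) := by
  classical
  let t : E ⊗[B] A →ₗ[B] A := TensorProduct.lift (LinearMap.mk₂ B
    (fun e a => trB act hfixed (c * e) • a)
    (fun e e' a => by
      show trB act hfixed (c * (e + e')) • a
          = trB act hfixed (c * e) • a + trB act hfixed (c * e') • a
      rw [mul_add, trB_add act hfixed hinj, add_smul])
    (fun b e a => by
      show trB act hfixed (c * (b • e)) • a = b • (trB act hfixed (c * e) • a)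
      rw [Algebra.smul_def, mul_left_comm, trB_mul_algebraMap act hfixed hinj, mul_smul])
    (fun e a a' => by
      show trB act hfixed (c * e) • (a + a')
          = trB act hfixed (c * e) • a + trB act hfixed (c * e) • a'
      rw [smul_add])
    (fun b e a => by
      show trB act hfixed (c * e) • (b • a) = b • (trB act hfixed (c * e) • a)
      rw [smul_comm]))
  have ht : ∀ (e : E) (a : A), t (e ⊗ₜ[B] a) = trB act hfixed (c * e) • a := fun _ _ => rfl
  have hta : ∀ a : A, t ((1:E) ⊗ₜ[B] a) = a := by
    intro a
    rw [ht, mul_one, hc, one_smul]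
  have key : ∀ ξ : E ⊗[B] A,
      (1:E) ⊗ₜ[B] t ξ = ∑ g : G, tensorAct act hfix A g (c • ξ) := by
    intro ξ
    induction ξ using TensorProduct.induction_on with
    | zero => simp
    | tmul e a =>
        rw [ht, TensorProduct.tmul_smul, ← algebraMap_smul E (trB act hfixed (c * e)),
          TensorProduct.smul_tmul', smul_eq_mul, mul_one, trB_spec, TensorProduct.sum_tmul]
        refine Finset.sum_congr rfl fun g _ => ?_
        rw [TensorProduct.smul_tmul', smul_eq_mul, tensorAct_tmul]
    | add x y hx hy =>
        rw [map_add, TensorProduct.tmul_add, hx, hy, smul_add, ← Finset.sum_add_distrib]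
        exact Finset.sum_congr rfl fun g _ => by rw [map_add]
  constructor
  · intro a a' haa
    have := congrArg (fun x : ↥(fixedSet act (Fobj act hfix A)) => t x.1) haa
    simpa [unitMap, hta] using this
  · intro x
    refine ⟨t x.1, Subtype.ext ?_⟩
    show (1:E) ⊗ₜ[B] t x.1 = x.1
    rw [key x.1]
    have hfix' : ∀ g : G, tensorAct act hfix A g x.1 = x.1 := x.2
    set y : E ⊗[B] A := x.1 with hy
    calc (∑ g : G, tensorAct act hfix A g (c • y))
        = ∑ g : G, act g c • y := by
          refine Finset.sum_congr rfl fun g _ => ?_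
          rw [tensorAct_smul, hfix' g]
      _ = ((∑ g : G, act g c) • y) := by rw [Finset.sum_smul]
      _ = y := by rw [← trB_spec act hfixed, hc, map_one, one_smul]

include facts hfixed hinj in
lemma counit_bijective (D : SemilinearGMod G B E act)
    {S : Finset (E × E)}
    (hS2 : ∀ g : G, (∑ q ∈ S, q.1 * act g q.2) = if g = 1 then 1 else 0) :
    Function.Bijective (counit act D) := by
  classical
  have fixmem : ∀ (d : D.carrier) (y : E), (∑ g : G, D.ρ g (y • d)) ∈ fixedSet act D := by
    intro d y h
    rw [map_sum]
    exact Fintype.sum_equiv (Equiv.mulRight h) _ _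
      (fun g => by simp only [Equiv.coe_mulRight]; rw [D.ρ_mul g h]; rfl)
  set ν : D.carrier → E ⊗[B] ↥(fixedSet act D) := fun d =>
    ∑ q ∈ S, q.1 ⊗ₜ[B] (⟨∑ g : G, D.ρ g (q.2 • d), fixmem d q.2⟩ : ↥(fixedSet act D)) with hν
  have hright : ∀ d : D.carrier, counit act D (ν d) = d := by
    intro d
    rw [hν, map_sum]
    calc (∑ q ∈ S, counit act D (q.1 ⊗ₜ[B] ⟨∑ g : G, D.ρ g (q.2 • d), fixmem d q.2⟩))
        = ∑ q ∈ S, ∑ g : G, (q.1 * act g q.2) • D.ρ g d := by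
          refine Finset.sum_congr rfl fun q _ => ?_
          rw [counit_tmul, Finset.smul_sum]
          refine Finset.sum_congr rfl fun g _ => ?_
          rw [D.ρ_smul, smul_smul]
      _ = ∑ g : G, (∑ q ∈ S, q.1 * act g q.2) • D.ρ g d := by
          rw [Finset.sum_comm]
          exact Finset.sum_congr rfl fun g _ => (Finset.sum_smul).symm
      _ = ∑ g : G, if g = 1 then D.ρ g d else 0 := by
          refine Finset.sum_congr rfl fun g _ => ?_
          rw [hS2 g]
          split <;> simp
      _ = d := by
          rw [Finset.sum_ite_eq' Finset.univ (1 : G) (fun g => D.ρ g d)]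
          simp [D.ρ_one]
  have hleft : ∀ ξ : E ⊗[B] ↥(fixedSet act D), ν (counit act D ξ) = ξ := by
    have ν_add : ∀ x y : D.carrier, ν (x + y) = ν x + ν y := by
      intro x y
      rw [hν, ← Finset.sum_add_distrib]
      refine Finset.sum_congr rfl fun q _ => ?_
      rw [← TensorProduct.tmul_add]
      congr 1
      apply Subtype.ext
      show (∑ g : G, D.ρ g (q.2 • (x + y))) = (∑ g : G, D.ρ g (q.2 • x)) + ∑ g : G, D.ρ g (q.2 • y)
      rw [← Finset.sum_add_distrib]
      exact Finset.sum_congr rfl fun g _ => by rw [smul_add, map_add]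
    intro ξ
    induction ξ using TensorProduct.induction_on with
    | zero =>
        rw [map_zero]
        have h0 : ν 0 = 0 := by
          simp only [hν]
          refine Finset.sum_eq_zero fun q _ => ?_
          rw [show (⟨∑ g : G, D.ρ g (q.2 • (0:D.carrier)), fixmem 0 q.2⟩ :
              ↥(fixedSet act D)) = 0 from Subtype.ext (by simp), TensorProduct.tmul_zero]
        exact h0
    | tmul e d =>
        rw [counit_tmul, hν]
        have inner : ∀ q : E × E, (⟨∑ g : G, D.ρ g (q.2 • (e • d.1)), fixmem _ q.2⟩ :
            ↥(fixedSet act D)) = trB act hfixed (q.2 * e) • d := by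
          intro q
          apply Subtype.ext
          show (∑ g : G, D.ρ g (q.2 • e • d.1)) = algebraMap B E (trB act hfixed (q.2 * e)) • d.1
          rw [trB_spec, Finset.sum_smul]
          refine Finset.sum_congr rfl fun g _ => ?_
          rw [smul_smul, D.ρ_smul, d.2 g]
        calc (∑ q ∈ S, q.1 ⊗ₜ[B] (⟨∑ g : G, D.ρ g (q.2 • (e • d.1)), fixmem _ q.2⟩ :
            ↥(fixedSet act D)))
            = ∑ q ∈ S, (q.1 * algebraMap B E (trB act hfixed (q.2 * e))) ⊗ₜ[B] d := by
              refine Finset.sum_congr rfl fun q _ => ?_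
              rw [inner q, TensorProduct.tmul_smul, ← algebraMap_smul E
                (trB act hfixed (q.2 * e)), TensorProduct.smul_tmul', smul_eq_mul, mul_comm]
          _ = e ⊗ₜ[B] d := by
              rw [← TensorProduct.sum_tmul, coords_dual act hfixed hinj hS2]
    | add x y hx hy => rw [map_add, ν_add, hx, hy]
  exact Function.bijective_iff_has_inverse.mpr ⟨ν, hleft, hright⟩

end trace

end hfixlemmas

end GaloisDescentAux
/-- For a `G`-Galois extension of commutative rings `p : B → E`, the
category of `B`-modules is equivalent to the category of `E`-modules with a
semilinear right `G`-action; one direction sends `A` to `E ⊗_B A` with action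
`(e ⊗ a)·g = (e·g) ⊗ a`, the other sends `(D, ρ)` to the fixed `B`-module `D^G`. -/
theorem galois_descent_module_equivalence [Finite G] [Nontrivial B] [Nontrivial E]
    (act : G → E ≃+* E)
    (hact1 : act 1 = RingEquiv.refl E)
    (hactmul : ∀ g h : G, act (g * h) = (act g).trans (act h))
    (hfix : ∀ (g : G) (b : B), act g (algebraMap B E b) = algebraMap B E b)
    (hinj : Function.Injective (algebraMap B E))
    (hfixed : ∀ e : E, (∀ g : G, act g e = e) ↔ ∃ b : B, algebraMap B E b = e)
    (hh : ∀ f : (E ⊗[B] E) →+ (G → E),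
      (∀ (e e' : E) (g : G), f (e ⊗ₜ[B] e') g = act g e * e') → Function.Bijective f) :
    ∃ e : ModuleCat.{u} B ≌ SemilinearGMod G B E act,
      (∀ A : ModuleCat.{u} B,
        ∃ φ : (e.functor.obj A).carrier ≃ₗ[E] E ⊗[B] A,
          ∀ (g : G) (d : (e.functor.obj A).carrier),
            φ ((e.functor.obj A).ρ g d) = tensorAct act hfix A g (φ d)) ∧
      (∀ D : SemilinearGMod G B E act,
        ∃ ψ : (e.inverse.obj D) ≃ {d : D.carrier // ∀ g : G, D.ρ g d = d},
          (∀ x y : e.inverse.obj D, (ψ (x + y)).1 = (ψ x).1 + (ψ y).1) ∧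
          (∀ (b : B) (x : e.inverse.obj D),
            (ψ (b • x)).1 = algebraMap B E b • (ψ x).1)) := by
  classical
  haveI facts : GaloisDescentAux.ActFacts (B := B) act := ⟨hact1, hactmul, hfix⟩
  cases nonempty_fintype G
  obtain ⟨S, hS⟩ := GaloisDescentAux.exists_coords act hh
  have hS2 := GaloisDescentAux.coords_symm (B := B) act hS
  obtain ⟨c, hc⟩ := GaloisDescentAux.exists_trace_one act hfixed hinj hS2
  set F := GaloisDescentAux.Ffunctor act hfix with hF
  set Gf := GaloisDescentAux.Gfunctor (B := B) act with hGf
  let uequiv : ∀ A : ModuleCat.{u} B,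
      (A : Type u) ≃ₗ[B] ↥(GaloisDescentAux.fixedSet act (GaloisDescentAux.Fobj act hfix A)) :=
    fun A => LinearEquiv.ofBijective (GaloisDescentAux.unitMap act hfix A)
      (GaloisDescentAux.unit_bijective act hfix hfixed hinj A hc)
  let η : CategoryTheory.Functor.id (ModuleCat.{u} B) ≅ F.comp Gf :=
    CategoryTheory.NatIso.ofComponents
      (fun A =>
        { hom := ModuleCat.ofHom (uequiv A).toLinearMap
          inv := ModuleCat.ofHom (uequiv A).symm.toLinearMap
          hom_inv_id := by
            ext a
            exact (uequiv A).symm_apply_apply a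
          inv_hom_id := by
            ext x
            exact (uequiv A).apply_symm_apply x })
      (fun {A A'} f => by
        ext a
        apply Subtype.ext
        show (1:E) ⊗ₜ[B] (f a) = LinearMap.baseChange E f.hom ((1:E) ⊗ₜ[B] a)
        rw [LinearMap.baseChange_tmul])
  let cequiv : ∀ D : SemilinearGMod G B E act,
      (E ⊗[B] ↥(GaloisDescentAux.fixedSet act D)) ≃ₗ[E] D.carrier :=
    fun D => LinearEquiv.ofBijective (GaloisDescentAux.counit act D)
      (GaloisDescentAux.counit_bijective act hfixed hinj D hS2)
  let ε : Gf.comp F ≅ CategoryTheory.Functor.id (SemilinearGMod G B E act) :=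
    CategoryTheory.NatIso.ofComponents
      (fun D =>
        { hom := ⟨(cequiv D).toLinearMap,
            fun g d => GaloisDescentAux.counit_equivariant act hfix D g d⟩
          inv := ⟨(cequiv D).symm.toLinearMap, fun g d => by
            apply (cequiv D).injective
            show GaloisDescentAux.counit act D ((cequiv D).symm (D.ρ g d))
              = GaloisDescentAux.counit act D
                (tensorAct act hfix (↥(GaloisDescentAux.fixedSet act D)) g ((cequiv D).symm d))
            rw [GaloisDescentAux.counit_equivariant act hfix D g ((cequiv D).symm d)]
            show (cequiv D) ((cequiv D).symm (D.ρ g d)) = D.ρ g ((cequiv D) ((cequiv D).symm d))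
            rw [LinearEquiv.apply_symm_apply, LinearEquiv.apply_symm_apply]⟩
          hom_inv_id := Subtype.ext (LinearMap.ext fun x => (cequiv D).symm_apply_apply x)
          inv_hom_id := Subtype.ext (LinearMap.ext fun d => (cequiv D).apply_symm_apply d) })
      (fun {D D'} f => by
        apply Subtype.ext
        apply LinearMap.ext
        intro x
        induction x using TensorProduct.induction_on with
        | zero => exact (map_zero _).trans (map_zero _).symm
        | tmul e d =>
            show e • (f.1 d.1) = f.1 (e • d.1)
            rw [f.1.map_smul]
        | add x y hx hy =>
            exact (map_add _ x y).trans ((congrArg₂ (· + ·) hx hy).trans (map_add _ x y).symm))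
  refine ⟨CategoryTheory.Equivalence.mk F Gf η ε, ?_, ?_⟩
  · intro A
    exact ⟨LinearEquiv.refl E _, fun g d => rfl⟩
  · intro D
    exact ⟨⟨fun x => ⟨x.1, x.2⟩, fun x => ⟨x.1, x.2⟩, fun x => rfl, fun x => rfl⟩,
      fun x y => rfl, fun b x => rfl⟩
end

section
/- Let E/B be a finite Galois extension of fields with Galois group G. Then H¹(G, GLₙ(E)) is trivial, where G acts on GLₙ(E) entrywise via its action on E: every 1-cocycle φ : G → GLₙ(E) (satisfying φ(hg) = φ(h)·(h·φ(g))) is a coboundary, i.e. there exists s ∈ GLₙ(E) with φ(g) = s·(g·s)⁻¹ for all g ∈ G. -/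
open Matrix Finset

/-- For a finite Galois field extension `E/B` with Galois group
`G = Gal(E/B)` acting entrywise on `GLₙ(E)`, `H¹(G, GLₙ(E))` is trivial: every
1-cocycle `φ` (i.e. `φ(hg) = φ(h)·(h·φ(g))`) is a coboundary, i.e. there is
`s ∈ GLₙ(E)` with `φ(g) = s·(g·s)⁻¹` for all `g`. -/
theorem H1_GL_n_trivial {B E : Type*} [Field B] [Field E] [Algebra B E]
    [IsGalois B E] [FiniteDimensional B E] (n : ℕ)
    (φ : (E ≃ₐ[B] E) → Matrix.GeneralLinearGroup (Fin n) E)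
    (hφ : ∀ g h : E ≃ₐ[B] E,
      φ (h * g) = φ h * Matrix.GeneralLinearGroup.map ((h : E ≃+* E) : E →+* E) (φ g)) :
    ∃ s : Matrix.GeneralLinearGroup (Fin n) E,
      ∀ g : E ≃ₐ[B] E,
        φ g = s * (Matrix.GeneralLinearGroup.map ((g : E ≃+* E) : E →+* E) s)⁻¹ := by
  classical
  -- coe of GL-map
  have coe_map : ∀ (f : E ≃ₐ[B] E) (u : Matrix.GeneralLinearGroup (Fin n) E),
      ((Matrix.GeneralLinearGroup.map ((f : E ≃+* E) : E →+* E) u :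
        Matrix.GeneralLinearGroup (Fin n) E) : Matrix (Fin n) (Fin n) E)
        = (u : Matrix (Fin n) (Fin n) E).map f := fun f u => rfl
  -- φ 1 = 1
  have hone : φ 1 = 1 := by
    have h11 := hφ 1 1
    rw [one_mul] at h11
    have hX : Matrix.GeneralLinearGroup.map (((1 : E ≃ₐ[B] E) : E ≃+* E) : E →+* E) (φ 1)
        = φ 1 := by
      apply Units.ext
      rw [coe_map]
      ext i j
      simp [Matrix.map_apply]
    rw [hX] at h11
    exact (left_eq_mul.mp h11)
  -- key matrix-level cocycle consequence
  have hcoc : ∀ g h : E ≃ₐ[B] E,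
      (φ h : Matrix (Fin n) (Fin n) E) * (φ g : Matrix (Fin n) (Fin n) E).map h
        = (φ (h * g) : Matrix (Fin n) (Fin n) E) := by
    intro g h
    rw [hφ g h, Units.val_mul, coe_map]
  -- the averaging map on vectors
  set P : (Fin n → E) → (Fin n → E) :=
    fun v => ∑ g : E ≃ₐ[B] E, (φ g : Matrix (Fin n) (Fin n) E).mulVec (fun i => g (v i))
    with hP
  -- the span of the range of P is everything
  have hspan : Submodule.span E (Set.range P) = ⊤ := by
    by_contra hne
    obtain ⟨f, hf0, hfbot⟩ := Submodule.exists_dual_map_eq_bot_of_lt_top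
      (lt_top_iff_ne_top.mpr hne) inferInstance
    have hfP : ∀ v, f (P v) = 0 := by
      intro v
      have : f (P v) ∈ (Submodule.span E (Set.range P)).map f :=
        Submodule.mem_map_of_mem (Submodule.subset_span (Set.mem_range_self v))
      rw [hfbot] at this
      exact (Submodule.mem_bot E).mp this
    -- linear independence of automorphisms as characters
    have hli : LinearIndependent E
        (fun (g : E ≃ₐ[B] E) => (⇑g : E → E)) := by
      have := (linearIndependent_monoidHom E E).comp
        (fun g : E ≃ₐ[B] E => ((g : E →+* E) : E →* E))
        (fun g₁ g₂ h => by
          apply AlgEquiv.ext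
          intro x
          exact DFunLike.congr_fun h x)
      exact this
    have hd : ∀ (g : E ≃ₐ[B] E) (k : Fin n),
        f (fun i => (φ g : Matrix (Fin n) (Fin n) E) i k) = 0 := by
      intro g k
      have key : ∀ c : E,
          ∑ g' : E ≃ₐ[B] E,
            (f (fun i => (φ g' : Matrix (Fin n) (Fin n) E) i k)) * g' c = 0 := by
        intro c
        have h1 := hfP (Pi.single k c)
        have h2 : P (Pi.single k c)
            = ∑ g' : E ≃ₐ[B] E,
              (g' c) • (fun i => (φ g' : Matrix (Fin n) (Fin n) E) i k) := by
          rw [hP]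
          refine Finset.sum_congr rfl fun g' _ => ?_
          have : (fun i => g' ((Pi.single k c : Fin n → E) i)) = (Pi.single k (g' c) : Fin n → E) := by
            ext i
            simp [Pi.single_apply, apply_ite g']
          rw [this, Matrix.mulVec_single]
          ext i
          simp [mul_comm]
        rw [h2, map_sum] at h1
        simpa [smul_eq_mul, mul_comm] using h1
      have := Fintype.linearIndependent_iff.mp hli
        (fun g' => f (fun i => (φ g' : Matrix (Fin n) (Fin n) E) i k)) ?_ g
      · exact this
      · ext c
        simpa [mul_comm] using key c
    -- hence f kills all standard basis vectors, so f = 0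
    apply hf0
    apply LinearMap.ext
    intro w
    have : w = ∑ k : Fin n, w k • (Pi.single k (1 : E) : Fin n → E) := by
      ext i
      simp [Finset.sum_apply, Pi.single_apply, mul_comm]
    rw [this, map_sum]
    simp only [LinearMap.map_smul]
    have hk : ∀ k : Fin n, f (Pi.single k (1 : E)) = 0 := by
      intro k
      have := hd 1 k
      have hcol : (fun i => ((φ 1 : Matrix (Fin n) (Fin n) E)) i k)
          = Pi.single k (1 : E) := by
        rw [hone]
        ext i
        simp [Matrix.one_apply, Pi.single_apply, eq_comm]
      rwa [hcol] at this
    simp [hk]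
  -- extract n linearly independent vectors in the range of P
  obtain ⟨b, hbsub, hbspan, hbli⟩ := exists_linearIndependent E (Set.range P)
  rw [hspan] at hbspan
  obtain ⟨bB, hbB⟩ : ∃ bB : Module.Basis b E (Fin n → E), ∀ x : b, bB x = (x : Fin n → E) :=
    ⟨Module.Basis.mk hbli (by rw [Subtype.range_coe, hbspan]), fun x => Module.Basis.mk_apply _ _ _⟩
  have e : b ≃ Fin n := bB.indexEquiv (Pi.basisFun E (Fin n))
  set c : Module.Basis (Fin n) E (Fin n → E) := bB.reindex e with hc
  have hcmem : ∀ j, (c j : Fin n → E) ∈ Set.range P := by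
    intro j
    rw [hc, Module.Basis.reindex_apply, hbB]
    exact hbsub (e.symm j).2
  choose u hu using fun j => hcmem j
  -- the matrix M and the sum S
  set M : Matrix (Fin n) (Fin n) E := Matrix.of (fun i j => u j i) with hM
  set S : Matrix (Fin n) (Fin n) E :=
    ∑ g : E ≃ₐ[B] E, (φ g : Matrix (Fin n) (Fin n) E) * M.map g with hS
  have hScol : ∀ j, (fun i => S i j) = c j := by
    intro j
    rw [← hu j, hP]
    ext i
    rw [hS]
    simp only [Finset.sum_apply, Matrix.sum_apply]
    refine Finset.sum_congr rfl fun g _ => ?_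
    simp [Matrix.mul_apply, Matrix.mulVec, dotProduct, hM, Matrix.map_apply]
  have hSunit : IsUnit S := by
    rw [← Matrix.linearIndependent_cols_iff_isUnit]
    have : (fun j => Sᵀ j) = fun j => (c j : Fin n → E) := by
      ext j i
      have := congrFun (hScol j) i
      simpa [Matrix.transpose_apply] using this
    rw [show S.col = fun j => Sᵀ j from rfl, this]
    exact c.linearIndependent
  -- conclude
  refine ⟨hSunit.unit, fun g => ?_⟩
  have hmain : (φ g : Matrix (Fin n) (Fin n) E) * S.map g = S := by
    have hmap : S.map ⇑g = ∑ g' : E ≃ₐ[B] E,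
        ((φ g' : Matrix (Fin n) (Fin n) E).map g) * M.map ⇑(g * g') := by
      rw [hS]
      ext i j
      simp [Matrix.map_apply, Matrix.sum_apply, Matrix.mul_apply, map_sum, _root_.map_mul,
        AlgEquiv.mul_apply]
    rw [hmap, Finset.mul_sum, hS]
    refine Fintype.sum_equiv (Equiv.mulLeft g) _ _ fun g' => ?_
    simp only [Equiv.coe_mulLeft]
    rw [← mul_assoc, hcoc g' g]
  apply eq_mul_inv_of_mul_eq
  apply Units.ext
  rw [Units.val_mul, coe_map, IsUnit.unit_spec]
  exact hmain
end
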